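/- Let f be a pseudo-polynomial with leading exponent θ_d, N a sufficiently large positive integer, P the largest real solution of f(P) = N, and let s be an integer with s > θ_d. Then the singular integral J(N) = ∫_{−1/2}^{1/2} V(α)^s e(−αN) dα satisfies J(N) ≪ P^{s − θ_d}, with implied constant depending only on f and s. -/

import Mathlib

open Finset

noncomputable def e (x : ℝ) : ℂ := Complex.exp (2 * Real.pi * Complex.I * x)

/-- A pseudo-polynomial `f(x) = a_d x^{θ_d} + ⋯ + a_1 x^{θ_1}` with real coefficients,
`a_d > 0`, real exponents `1 ≤ θ_1 < ⋯ < θ_d`, and at least one non-integral exponent. -/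
structure PseudoPoly where
  d : ℕ
  d_pos : 1 ≤ d
  a : ℕ → ℝ
  θ : ℕ → ℝ
  a_pos : 0 < a d
  θ_one : 1 ≤ θ 1
  θ_mono : ∀ i, 1 ≤ i → i < d → θ i < θ (i + 1)
  nonint : ∃ i, 1 ≤ i ∧ i ≤ d ∧ ∀ n : ℤ, θ i ≠ (n : ℝ)

noncomputable def PseudoPoly.eval (f : PseudoPoly) (x : ℝ) : ℝ :=
  ∑ i ∈ Finset.Icc 1 f.d, f.a i * x ^ f.θ i

/-- `P` is the largest real solution of `f(P) = N`. -/
def PseudoPoly.IsLargestRoot (f : PseudoPoly) (N : ℝ) (P : ℝ) : Prop :=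
  f.eval P = N ∧ ∀ x : ℝ, f.eval x = N → x ≤ P

/-- `V(α) = (1/a_d)^{1/θ_d} (1/θ_d) Σ_{m=1}^{N} m^{1/θ_d − 1} e(αm)`. -/
noncomputable def V (f : PseudoPoly) (N : ℕ) (α : ℝ) : ℂ :=
  (((1 / f.a f.d) ^ (1 / f.θ f.d) * (1 / f.θ f.d) : ℝ) : ℂ) *
    ∑ m ∈ Finset.Icc 1 N, (((m : ℝ) ^ (1 / f.θ f.d - 1) : ℝ) : ℂ) * e (α * m)

lemma norm_e (x : ℝ) : ‖e x‖ = 1 := by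
  have : (2 * Real.pi * Complex.I * (x:ℂ)).re = 0 := by
    simp [Complex.mul_re, Complex.mul_im]
  simp [e, Complex.norm_exp, this]

lemma sum_rpow_le {β : ℝ} (hβ0 : 0 < β) (hβ1 : β ≤ 1) (N : ℕ) :
    ∑ m ∈ Icc 1 N, (m : ℝ) ^ (β - 1) ≤ (N : ℝ) ^ β / β := by
  induction N with
  | zero => simp [Real.zero_rpow (ne_of_gt hβ0)]
  | succ n ih =>
    rw [Finset.sum_Icc_succ_top (by omega)]
    have hy : (0:ℝ) < (n:ℝ) + 1 := by positivity
    have key : ((n:ℝ) + 1) ^ (β - 1) ≤ (((n:ℝ)+1) ^ β - (n:ℝ) ^ β) / β := by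
      have amgm := Real.geom_mean_le_arith_mean2_weighted hβ0.le (by linarith : (0:ℝ) ≤ 1 - β)
        (by positivity : (0:ℝ) ≤ (n:ℝ)/((n:ℝ)+1)) zero_le_one (by ring)
      rw [Real.one_rpow, mul_one, Real.div_rpow (by positivity) hy.le] at amgm
      -- amgm : n^β / (n+1)^β ≤ β * (n/(n+1)) + (1-β) * 1
      have h1 : ((n:ℝ)+1) ^ (β-1) = ((n:ℝ)+1)^β / ((n:ℝ)+1) := Real.rpow_sub_one hy.ne' β
      have h2 : (0:ℝ) < ((n:ℝ)+1)^β := Real.rpow_pos_of_pos hy β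
      rw [div_le_iff₀ h2] at amgm
      rw [h1, div_le_div_iff₀ hy hβ0]
      -- n^β ≤ (β * (n/(n+1)) + (1-β)) * (n+1)^β
      have e1 : (n:ℝ)^β * ((n:ℝ)+1) ≤ β*(n:ℝ)*((n:ℝ)+1)^β + (1-β)*((n:ℝ)+1)^β*((n:ℝ)+1) := by
        calc (n:ℝ)^β * ((n:ℝ)+1) ≤ ((β * ((n:ℝ)/((n:ℝ)+1)) + (1-β)*1) * ((n:ℝ)+1)^β) * ((n:ℝ)+1) :=
              mul_le_mul_of_nonneg_right amgm hy.le
          _ = β*(n:ℝ)*((n:ℝ)+1)^β + (1-β)*((n:ℝ)+1)^β*((n:ℝ)+1) := by field_simp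
      nlinarith [e1]
    have hc : ((n+1:ℕ):ℝ) = (n:ℝ) + 1 := by push_cast; ring
    rw [hc]
    calc ∑ k ∈ Icc 1 n, (k:ℝ) ^ (β - 1) + ((n:ℝ) + 1) ^ (β - 1)
        ≤ (n:ℝ) ^ β / β + (((n:ℝ)+1) ^ β - (n:ℝ) ^ β) / β := add_le_add ih key
      _ = ((n:ℝ) + 1) ^ β / β := by ring

lemma e_eq_pow (α : ℝ) (m : ℕ) : e (α * m) = (e α) ^ m := by
  rw [e, e, ← Complex.exp_nat_mul]
  congr 1
  push_cast
  ring

lemma norm_e_sub_one (α : ℝ) (h0 : 0 < α) (h2 : α ≤ 1/2) :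
    4 * α ≤ ‖e α - 1‖ := by
  have hpi := Real.pi_pos
  have he : e α = Complex.exp (((2 * Real.pi * α : ℝ) : ℂ) * Complex.I) := by
    rw [e]; congr 1; push_cast; ring
  have hsq : ‖e α - 1‖ ^ 2 = 2 - 2 * Real.cos (2 * Real.pi * α) := by
    have hrep : e α - 1 = Complex.ofReal (Real.cos (2 * Real.pi * α) - 1) +
        Complex.ofReal (Real.sin (2 * Real.pi * α)) * Complex.I := by
      rw [he, Complex.exp_mul_I, ← Complex.ofReal_cos, ← Complex.ofReal_sin]
      push_cast
      ring
    rw [hrep, Complex.sq_norm, Complex.normSq_add_mul_I]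
    nlinarith [Real.sin_sq_add_cos_sq (2 * Real.pi * α)]
  have hcos : 2 - 2 * Real.cos (2 * Real.pi * α) = 4 * Real.sin (Real.pi * α) ^ 2 := by
    have := Real.cos_two_mul (Real.pi * α)
    have hh : 2 * (Real.pi * α) = 2 * Real.pi * α := by ring
    rw [hh] at this
    nlinarith [Real.sin_sq_add_cos_sq (Real.pi * α)]
  have hsin : 2 * α ≤ Real.sin (Real.pi * α) := by
    have := Real.mul_le_sin (x := Real.pi * α) (by positivity) (by nlinarith)
    calc 2 * α = 2 / Real.pi * (Real.pi * α) := by field_simp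
      _ ≤ Real.sin (Real.pi * α) := this
  nlinarith [norm_nonneg (e α - 1), hsq, hcos, hsin, h0]

lemma norm_geom_sum_le (α : ℝ) (h0 : 0 < α) (h2 : α ≤ 1/2) (M : ℕ) :
    ‖∑ m ∈ Icc 1 M, e (α * m)‖ ≤ 1 / (2 * α) := by
  have hne : e α ≠ 1 := by
    intro h
    have := norm_e_sub_one α h0 h2
    rw [h] at this
    simp at this
    linarith
  have : ∑ m ∈ Icc 1 M, e (α * m) = ((e α) ^ (M+1) - (e α) ^ 1) / (e α - 1) := by
    rw [← Finset.Ico_add_one_right_eq_Icc]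
    rw [← geom_sum_Ico hne (by omega)]
    exact Finset.sum_congr rfl fun m _ => e_eq_pow α m
  rw [this]
  rw [norm_div]
  have h4 : (0:ℝ) < 4 * α := by linarith
  have hd := norm_e_sub_one α h0 h2
  have hnum : ‖(e α) ^ (M+1) - (e α) ^ 1‖ ≤ 2 := by
    calc ‖(e α) ^ (M+1) - (e α) ^ 1‖ ≤ ‖(e α)^(M+1)‖ + ‖(e α)^1‖ := norm_sub_le _ _
      _ = 1 + 1 := by rw [norm_pow, norm_pow, norm_e]; norm_num
      _ = 2 := by norm_num
  calc ‖(e α)^(M+1) - (e α)^1‖ / ‖e α - 1‖ ≤ 2 / (4 * α) :=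
        div_le_div₀ (by norm_num) hnum h4 hd
      _ = 1 / (2 * α) := by ring

lemma abel_identity (a : ℕ → ℝ) (z : ℕ → ℂ) (M N : ℕ) (hMN : M ≤ N) :
    ∑ m ∈ Ioc M N, (a m : ℂ) * z m =
      ∑ k ∈ Ioc M N, ((a k - a (k+1) : ℝ) : ℂ) * (∑ m ∈ Ioc M k, z m) +
        (a (N+1) : ℂ) * (∑ m ∈ Ioc M N, z m) := by
  induction N with
  | zero =>
    interval_cases M
    simp
  | succ n ih =>
    rcases Nat.lt_or_ge M (n+1) with h | h
    · have hMn : M ≤ n := by omega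
      rw [Finset.sum_Ioc_succ_top hMn, Finset.sum_Ioc_succ_top hMn, Finset.sum_Ioc_succ_top hMn,
        ih hMn]
      push_cast
      ring
    · have : M = n + 1 := by omega
      subst this
      simp

lemma abel_bound (a : ℕ → ℝ) (z : ℕ → ℂ) (M N : ℕ) (B : ℝ) (hB : 0 ≤ B)
    (ha0 : ∀ k, M + 1 ≤ k → 0 ≤ a k)
    (hmono : ∀ k, M + 1 ≤ k → a (k+1) ≤ a k)
    (hS : ∀ k, ‖∑ m ∈ Ioc M k, z m‖ ≤ B) :
    ‖∑ m ∈ Ioc M N, (a m : ℂ) * z m‖ ≤ B * a (M+1) := by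
  rcases Nat.lt_or_ge N M with h | hMN
  · rw [Finset.Ioc_eq_empty (by omega)]
    simp
    exact mul_nonneg hB (ha0 _ le_rfl)
  rw [abel_identity a z M N hMN]
  have htel : ∀ K, M ≤ K → ∑ k ∈ Ioc M K, (a k - a (k+1)) = a (M+1) - a (K+1) := by
    intro K hK
    induction K with
    | zero => interval_cases M; simp
    | succ n ih =>
      rcases Nat.lt_or_ge M (n+1) with h | h
      · rw [Finset.sum_Ioc_succ_top (by omega : M ≤ n), ih (by omega)]
        ring
      · have : M = n + 1 := by omega
        subst this; simp
  calc ‖∑ k ∈ Ioc M N, ((a k - a (k+1) : ℝ) : ℂ) * (∑ m ∈ Ioc M k, z m) +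
        (a (N+1) : ℂ) * (∑ m ∈ Ioc M N, z m)‖
      ≤ ‖∑ k ∈ Ioc M N, ((a k - a (k+1) : ℝ) : ℂ) * (∑ m ∈ Ioc M k, z m)‖ +
        ‖(a (N+1) : ℂ) * (∑ m ∈ Ioc M N, z m)‖ := norm_add_le _ _
    _ ≤ (∑ k ∈ Ioc M N, (a k - a (k+1)) * B) + a (N+1) * B := by
        apply add_le_add
        · refine (norm_sum_le _ _).trans (Finset.sum_le_sum fun k hk => ?_)
          rw [norm_mul, Complex.norm_real, Real.norm_eq_abs,
            abs_of_nonneg (by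
              have := hmono k (by simpa using (Finset.mem_Ioc.mp hk).1)
              linarith)]
          exact mul_le_mul_of_nonneg_left (hS k) (by
            have := hmono k (by simpa using (Finset.mem_Ioc.mp hk).1)
            linarith)
        · rw [norm_mul, Complex.norm_real, Real.norm_eq_abs,
            abs_of_nonneg (ha0 _ (by omega))]
          exact mul_le_mul_of_nonneg_left (hS N) (ha0 _ (by omega))
    _ = (a (M+1) - a (N+1)) * B + a (N+1) * B := by
        rw [← Finset.sum_mul, htel N hMN]
    _ = B * a (M+1) := by ring

lemma norm_W_trivial {β : ℝ} (hβ0 : 0 < β) (hβ1 : β ≤ 1) (N : ℕ) (α : ℝ) :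
    ‖∑ m ∈ Icc 1 N, (((m:ℝ) ^ (β - 1) : ℝ) : ℂ) * e (α * m)‖ ≤ (N:ℝ) ^ β / β := by
  calc ‖∑ m ∈ Icc 1 N, (((m:ℝ) ^ (β - 1) : ℝ) : ℂ) * e (α * m)‖
      ≤ ∑ m ∈ Icc 1 N, ‖(((m:ℝ) ^ (β - 1) : ℝ) : ℂ) * e (α * m)‖ := norm_sum_le _ _
    _ = ∑ m ∈ Icc 1 N, (m:ℝ) ^ (β - 1) := by
        refine Finset.sum_congr rfl fun m hm => ?_
        rw [norm_mul, norm_e, mul_one, Complex.norm_real, Real.norm_eq_abs,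
          abs_of_nonneg (Real.rpow_nonneg (Nat.cast_nonneg m) _)]
    _ ≤ (N:ℝ) ^ β / β := sum_rpow_le hβ0 hβ1 N

lemma norm_W_decay {β : ℝ} (hβ0 : 0 < β) (hβ1 : β ≤ 1) (N : ℕ) {α : ℝ}
    (h0 : 0 < α) (h2 : α ≤ 1/2) :
    ‖∑ m ∈ Icc 1 N, (((m:ℝ) ^ (β - 1) : ℝ) : ℂ) * e (α * m)‖ ≤
      (1/β + 1) * (1/α) ^ β := by
  set M : ℕ := ⌊1/α⌋₊ with hMdef
  have hα1 : (2:ℝ) ≤ 1/α := by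
    rw [le_div_iff₀ h0]; linarith
  have hM2 : 2 ≤ M := by
    rw [hMdef]; exact Nat.le_floor (by exact_mod_cast hα1)
  have hMle : (M:ℝ) ≤ 1/α := Nat.floor_le (by positivity)
  have hMgt : 1/α < (M:ℝ) + 1 := Nat.lt_floor_add_one _
  have hαpow : (0:ℝ) < (1/α) ^ β := Real.rpow_pos_of_pos (by positivity) β
  have hhead : ∀ K : ℕ, (K:ℝ) ≤ 1/α →
      ‖∑ m ∈ Icc 1 K, (((m:ℝ) ^ (β - 1) : ℝ) : ℂ) * e (α * m)‖ ≤ (1/β) * (1/α) ^ β := by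
    intro K hK
    calc ‖∑ m ∈ Icc 1 K, (((m:ℝ) ^ (β - 1) : ℝ) : ℂ) * e (α * m)‖
        ≤ (K:ℝ) ^ β / β := norm_W_trivial hβ0 hβ1 K α
      _ ≤ (1/α) ^ β / β := by
          gcongr <;> first | positivity | exact hK
      _ = (1/β) * (1/α) ^ β := by ring
  rcases Nat.lt_or_ge M N with hMN | hNM
  · -- split the sum
    have hIoc : ∀ n : ℕ, Icc 1 n = Ioc 0 n := fun n => Finset.Icc_add_one_left_eq_Ioc 0 n
    have hsplit : Icc 1 N = Icc 1 M ∪ Ioc M N := by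
      rw [hIoc, hIoc, Finset.Ioc_union_Ioc_eq_Ioc (by omega) (by omega)]
    have hdisj : Disjoint (Icc 1 M) (Ioc M N) := by
      rw [Finset.disjoint_left]
      intro x hx hx'
      simp only [Finset.mem_Icc, Finset.mem_Ioc] at hx hx'
      omega
    rw [hsplit, Finset.sum_union hdisj]
    have hS : ∀ k, ‖∑ m ∈ Ioc M k, e (α * m)‖ ≤ 1/α := by
      intro k
      rcases Nat.lt_or_ge M k with hk | hk
      · have : ∑ m ∈ Ioc M k, e (α * m) =
            (∑ m ∈ Icc 1 k, e (α * m)) - ∑ m ∈ Icc 1 M, e (α * m) := by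
          rw [hIoc, hIoc, ← Finset.Ioc_union_Ioc_eq_Ioc (by omega : 0 ≤ M) (by omega : M ≤ k),
            Finset.sum_union (by
              rw [Finset.disjoint_left]
              intro x hx hx'
              simp only [Finset.mem_Icc, Finset.mem_Ioc] at hx hx'
              omega)]
          ring
        rw [this]
        calc ‖(∑ m ∈ Icc 1 k, e (α * m)) - ∑ m ∈ Icc 1 M, e (α * m)‖
            ≤ ‖∑ m ∈ Icc 1 k, e (α * m)‖ + ‖∑ m ∈ Icc 1 M, e (α * m)‖ := norm_sub_le _ _
          _ ≤ 1/(2*α) + 1/(2*α) := add_le_add (norm_geom_sum_le α h0 h2 k) (norm_geom_sum_le α h0 h2 M)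
          _ = 1/α := by rw [← add_div]; rw [div_eq_div_iff (by positivity) h0.ne']; ring
      · rw [Finset.Ioc_eq_empty (by omega)]
        simp only [Finset.sum_empty, norm_zero]
        positivity
    have htail : ‖∑ m ∈ Ioc M N, (((m:ℝ) ^ (β - 1) : ℝ) : ℂ) * e (α * m)‖ ≤ (1/α) ^ β := by
      have := abel_bound (fun m => (m:ℝ) ^ (β-1)) (fun m => e (α * m)) M N (1/α)
        (by positivity)
        (fun k hk => Real.rpow_nonneg (Nat.cast_nonneg k) _)
        (fun k hk => by
          have hkpos : (0:ℝ) < (k:ℝ) := Nat.cast_pos.mpr (by omega)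
          have h := Real.rpow_le_rpow_of_nonpos hkpos
            (by exact_mod_cast Nat.le_succ k : (k:ℝ) ≤ ((k+1:ℕ):ℝ)) (by linarith : β - 1 ≤ 0)
          simpa using h)
        hS
      refine this.trans ?_
      have h1 : ((M:ℝ)+1) ^ (β-1) ≤ (1/α) ^ (β-1) :=
        Real.rpow_le_rpow_of_nonpos (by positivity) hMgt.le (by linarith)
      calc (1/α) * (((M+1:ℕ)):ℝ) ^ (β-1) ≤ (1/α) * (1/α) ^ (β-1) := by
            apply mul_le_mul_of_nonneg_left _ (by positivity)
            push_cast
            exact h1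
        _ = (1/α) ^ β := by
            rw [Real.rpow_sub_one (by positivity : (1/α : ℝ) ≠ 0)]
            field_simp
    calc ‖(∑ m ∈ Icc 1 M, (((m:ℝ) ^ (β - 1) : ℝ) : ℂ) * e (α * m))
          + ∑ m ∈ Ioc M N, (((m:ℝ) ^ (β - 1) : ℝ) : ℂ) * e (α * m)‖
        ≤ ‖∑ m ∈ Icc 1 M, (((m:ℝ) ^ (β - 1) : ℝ) : ℂ) * e (α * m)‖
          + ‖∑ m ∈ Ioc M N, (((m:ℝ) ^ (β - 1) : ℝ) : ℂ) * e (α * m)‖ := norm_add_le _ _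
      _ ≤ (1/β) * (1/α) ^ β + (1/α) ^ β := add_le_add (hhead M hMle) htail
      _ = (1/β + 1) * (1/α) ^ β := by ring
  · calc ‖∑ m ∈ Icc 1 N, (((m:ℝ) ^ (β - 1) : ℝ) : ℂ) * e (α * m)‖
        ≤ (1/β) * (1/α) ^ β := hhead N (le_trans (by exact_mod_cast hNM) hMle)
      _ ≤ (1/β + 1) * (1/α) ^ β := by nlinarith


lemma PseudoPoly.theta_mono' (f : PseudoPoly) : ∀ j k, 1 ≤ j → j ≤ k → k ≤ f.d →
    f.θ j ≤ f.θ k := by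
  intro j k hj hjk hk
  induction k with
  | zero => omega
  | succ n ih =>
    rcases Nat.lt_or_ge j (n+1) with h | h
    · have h1 : f.θ j ≤ f.θ n := ih (by omega) (by omega)
      have h2 : f.θ n < f.θ (n+1) := f.θ_mono n (by omega) (by omega)
      linarith
    · have : j = n + 1 := by omega
      subst this; rfl

lemma PseudoPoly.theta_ge_one (f : PseudoPoly) {i : ℕ} (h1 : 1 ≤ i) (h2 : i ≤ f.d) :
    1 ≤ f.θ i :=
  le_trans f.θ_one (f.theta_mono' 1 i le_rfl h1 h2)

lemma PseudoPoly.theta_le (f : PseudoPoly) {i : ℕ} (h1 : 1 ≤ i) (h2 : i ≤ f.d) :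
    f.θ i ≤ f.θ f.d :=
  f.theta_mono' i f.d h1 h2 le_rfl

lemma PseudoPoly.continuous_eval (f : PseudoPoly) : Continuous f.eval := by
  apply continuous_finset_sum
  intro i hi
  simp only [Finset.mem_Icc] at hi
  exact continuous_const.mul
    (Real.continuous_rpow_const (le_trans zero_le_one (f.theta_ge_one hi.1 hi.2)))

noncomputable def PseudoPoly.A (f : PseudoPoly) : ℝ := ∑ i ∈ Finset.Icc 1 f.d, |f.a i|

lemma PseudoPoly.A_pos (f : PseudoPoly) : 0 < f.A := by
  have : |f.a f.d| ≤ f.A := Finset.single_le_sum (f := fun i => |f.a i|)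
    (fun i _ => abs_nonneg _) (Finset.mem_Icc.mpr ⟨f.d_pos, le_rfl⟩)
  have := abs_nonneg (f.a f.d)
  have := f.a_pos
  calc (0:ℝ) < f.a f.d := f.a_pos
    _ ≤ |f.a f.d| := le_abs_self _
    _ ≤ f.A := by assumption

lemma PseudoPoly.root_bound (f : PseudoPoly) {N P : ℝ} (hN : f.A < N)
    (hP : f.IsLargestRoot N P) : 1 ≤ P ∧ N ≤ f.A * P ^ f.θ f.d := by
  have hA := f.A_pos
  have hNpos : 0 < N := lt_trans hA hN
  set θd := f.θ f.d with hθd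
  have hθd1 : 1 ≤ θd := f.theta_ge_one f.d_pos le_rfl
  -- the cutoff exponent
  set δ : ℝ := if 2 ≤ f.d then θd - f.θ (f.d - 1) else 1 with hδdef
  have hδpos : 0 < δ := by
    rw [hδdef]
    split_ifs with h
    · have := f.θ_mono (f.d - 1) (by omega) (by omega)
      have heq : f.d - 1 + 1 = f.d := by omega
      rw [heq] at this
      linarith
    · norm_num
  have hθδ : 0 ≤ θd - δ := by
    rw [hδdef]
    split_ifs with h
    · have := f.theta_ge_one (i := f.d - 1) (by omega) (by omega)
      linarith
    · linarith
  have hexp_le : ∀ i, 1 ≤ i → i ≤ f.d - 1 → f.θ i ≤ θd - δ := by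
    intro i h1 h2
    have hd2 : 2 ≤ f.d := by omega
    rw [hδdef, if_pos hd2]
    have := f.theta_mono' i (f.d - 1) h1 h2 (by omega)
    linarith
  -- lower bound for eval on x ≥ 1
  have hlow : ∀ x : ℝ, 1 ≤ x → f.a f.d * x ^ θd - f.A * x ^ (θd - δ) ≤ f.eval x := by
    intro x hx
    have hx0 : (0:ℝ) < x := by linarith
    have hd : f.d = (f.d - 1) + 1 := by have := f.d_pos; omega
    have hsplit : f.eval x = (∑ i ∈ Finset.Icc 1 (f.d - 1), f.a i * x ^ f.θ i)
        + f.a f.d * x ^ θd := by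
      calc f.eval x = ∑ i ∈ Finset.Icc 1 ((f.d - 1) + 1), f.a i * x ^ f.θ i := by
            rw [PseudoPoly.eval, ← hd]
        _ = (∑ i ∈ Finset.Icc 1 (f.d - 1), f.a i * x ^ f.θ i)
            + f.a ((f.d - 1) + 1) * x ^ f.θ ((f.d - 1) + 1) :=
            Finset.sum_Icc_succ_top (by omega) _
        _ = (∑ i ∈ Finset.Icc 1 (f.d - 1), f.a i * x ^ f.θ i) + f.a f.d * x ^ θd := by
            rw [← hd, hθd]
    have hterm : ∀ i ∈ Finset.Icc 1 (f.d - 1),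
        -(|f.a i| * x ^ (θd - δ)) ≤ f.a i * x ^ f.θ i := by
      intro i hi
      simp only [Finset.mem_Icc] at hi
      have hle : x ^ f.θ i ≤ x ^ (θd - δ) :=
        Real.rpow_le_rpow_of_exponent_le hx (hexp_le i hi.1 hi.2)
      have hpos : 0 ≤ x ^ f.θ i := Real.rpow_nonneg hx0.le _
      have h1 : -(|f.a i| * x ^ (θd - δ)) ≤ -(|f.a i| * x ^ f.θ i) := by
        have := mul_le_mul_of_nonneg_left hle (abs_nonneg (f.a i))
        linarith
      have h2 : -(|f.a i| * x ^ f.θ i) ≤ f.a i * x ^ f.θ i := by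
        have := mul_le_mul_of_nonneg_right (neg_abs_le (f.a i)) hpos
        linarith
      linarith
    have hsum : -(f.A * x ^ (θd - δ)) ≤ ∑ i ∈ Finset.Icc 1 (f.d - 1), f.a i * x ^ f.θ i := by
      calc -(f.A * x ^ (θd - δ))
          ≤ -((∑ i ∈ Finset.Icc 1 (f.d - 1), |f.a i|) * x ^ (θd - δ)) := by
            have hsub : ∑ i ∈ Finset.Icc 1 (f.d - 1), |f.a i| ≤ f.A :=
              Finset.sum_le_sum_of_subset_of_nonneg
                (Finset.Icc_subset_Icc le_rfl (by omega)) (fun i _ _ => abs_nonneg _)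
            have := mul_le_mul_of_nonneg_right hsub (Real.rpow_nonneg hx0.le (θd - δ))
            linarith
        _ = ∑ i ∈ Finset.Icc 1 (f.d - 1), -(|f.a i| * x ^ (θd - δ)) := by
            rw [Finset.sum_neg_distrib, ← Finset.sum_mul]
        _ ≤ _ := Finset.sum_le_sum hterm
    rw [hsplit]
    linarith
  -- a point where eval exceeds N
  set x₁ : ℝ := max 1 (((N + f.A) / f.a f.d) ^ (1/δ)) with hx₁def
  have hx₁1 : 1 ≤ x₁ := le_max_left _ _
  have hx₁0 : (0:ℝ) < x₁ := by linarith
  have hNA : (0:ℝ) ≤ (N + f.A) / f.a f.d := div_nonneg (by linarith) f.a_pos.le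
  have hx₁δ : (N + f.A) / f.a f.d ≤ x₁ ^ δ := by
    calc (N + f.A) / f.a f.d = (((N + f.A) / f.a f.d) ^ (1/δ)) ^ δ := by
          rw [one_div, Real.rpow_inv_rpow hNA hδpos.ne']
      _ ≤ x₁ ^ δ := Real.rpow_le_rpow (Real.rpow_nonneg hNA _) (le_max_right _ _) hδpos.le
  have hevalx₁ : N ≤ f.eval x₁ := by
    have h1 : N + f.A ≤ f.a f.d * x₁ ^ δ := by
      rw [div_le_iff₀ f.a_pos] at hx₁δ
      linarith
    have h2 : (1:ℝ) ≤ x₁ ^ (θd - δ) := Real.one_le_rpow hx₁1 hθδ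
    have h3 : x₁ ^ θd = x₁ ^ (θd - δ) * x₁ ^ δ := by
      rw [← Real.rpow_add hx₁0]; ring_nf
    have h4 := hlow x₁ hx₁1
    have h5 : N ≤ f.a f.d * x₁ ^ θd - f.A * x₁ ^ (θd - δ) := by
      rw [h3]
      have hge : (N + f.A) * x₁ ^ (θd - δ) ≤ (f.a f.d * x₁ ^ δ) * x₁ ^ (θd - δ) :=
        mul_le_mul_of_nonneg_right h1 (by positivity)
      nlinarith [h2, hNpos, hA]
    linarith
  -- existence of a root in [1, x₁] and hence 1 ≤ P
  have heval1 : f.eval 1 ≤ f.A := by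
    rw [PseudoPoly.eval]
    apply Finset.sum_le_sum
    intro i hi
    rw [Real.one_rpow, mul_one]
    exact le_abs_self _
  have hroot : ∃ x ∈ Set.Icc (1:ℝ) x₁, f.eval x = N := by
    have hsub := intermediate_value_Icc hx₁1 f.continuous_eval.continuousOn
    have hNmem : N ∈ Set.Icc (f.eval 1) (f.eval x₁) := ⟨by linarith, hevalx₁⟩
    obtain ⟨x, hx, hfx⟩ := hsub hNmem
    exact ⟨x, hx, hfx⟩
  obtain ⟨x, hxmem, hfx⟩ := hroot
  have hP1 : 1 ≤ P := le_trans hxmem.1 (hP.2 x hfx)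
  refine ⟨hP1, ?_⟩
  have hP0 : (0:ℝ) < P := by linarith
  calc N = f.eval P := hP.1.symm
    _ = ∑ i ∈ Finset.Icc 1 f.d, f.a i * P ^ f.θ i := rfl
    _ ≤ ∑ i ∈ Finset.Icc 1 f.d, |f.a i| * P ^ θd := by
        apply Finset.sum_le_sum
        intro i hi
        simp only [Finset.mem_Icc] at hi
        have hle : P ^ f.θ i ≤ P ^ θd :=
          Real.rpow_le_rpow_of_exponent_le hP1 (f.theta_le hi.1 hi.2)
        have h1 : f.a i * P ^ f.θ i ≤ |f.a i| * P ^ f.θ i :=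
          mul_le_mul_of_nonneg_right (le_abs_self _) (Real.rpow_nonneg hP0.le _)
        have h2 : |f.a i| * P ^ f.θ i ≤ |f.a i| * P ^ θd :=
          mul_le_mul_of_nonneg_left hle (abs_nonneg _)
        linarith
    _ = f.A * P ^ θd := by rw [← Finset.sum_mul, PseudoPoly.A]

lemma e_neg (x : ℝ) : e (-x) = (starRingEnd ℂ) (e x) := by
  rw [e, e, ← Complex.exp_conj]
  congr 1
  simp only [map_mul, Complex.conj_I, Complex.conj_ofReal, map_ofNat]
  push_cast
  ring

namespace SingularAux

variable (f : PseudoPoly) (N : ℕ)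

noncomputable def θd : ℝ := f.θ f.d
noncomputable def β : ℝ := 1 / θd f
noncomputable def c₀ : ℝ := (1 / f.a f.d) ^ (1 / f.θ f.d) * (1 / f.θ f.d)
noncomputable def K : ℝ := c₀ f * (1 / β f + 1)

lemma θd_ge_one : 1 ≤ θd f := f.theta_ge_one f.d_pos le_rfl
lemma θd_pos : 0 < θd f := lt_of_lt_of_le one_pos (θd_ge_one f)
lemma β_pos : 0 < β f := by rw [β]; have := θd_pos f; positivity
lemma β_le_one : β f ≤ 1 := by
  rw [β]
  rw [div_le_one (θd_pos f)]
  exact θd_ge_one f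
lemma c₀_pos : 0 < c₀ f := by
  have := f.a_pos
  have := θd_pos f
  rw [c₀]
  have h1 : (0:ℝ) < (1 / f.a f.d) ^ (1 / f.θ f.d) := Real.rpow_pos_of_pos (by positivity) _
  have h2 : (0:ℝ) < 1 / f.θ f.d := by
    rw [show f.θ f.d = θd f from rfl] at *
    positivity
  positivity
lemma K_pos : 0 < K f := by
  have := c₀_pos f
  have := β_pos f
  rw [K]
  positivity

lemma V_eq (α : ℝ) : V f N α =
    ((c₀ f : ℝ) : ℂ) * ∑ m ∈ Finset.Icc 1 N, (((m : ℝ) ^ (β f - 1) : ℝ) : ℂ) * e (α * m) := by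
  rfl

lemma norm_V_le_sup (α : ℝ) : ‖V f N α‖ ≤ K f * (N:ℝ) ^ β f := by
  rw [V_eq, norm_mul, Complex.norm_real, Real.norm_eq_abs, abs_of_nonneg (c₀_pos f).le]
  calc c₀ f * ‖∑ m ∈ Finset.Icc 1 N, (((m : ℝ) ^ (β f - 1) : ℝ) : ℂ) * e (α * m)‖
      ≤ c₀ f * ((N:ℝ) ^ β f / β f) :=
        mul_le_mul_of_nonneg_left (norm_W_trivial (β_pos f) (β_le_one f) N α) (c₀_pos f).le
    _ ≤ K f * (N:ℝ) ^ β f := by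
        rw [K]
        have h1 : (0:ℝ) ≤ (N:ℝ) ^ β f := Real.rpow_nonneg (Nat.cast_nonneg N) _
        have h2 := (c₀_pos f).le
        have h3 := (β_pos f)
        rw [div_eq_mul_inv, one_div]
        nlinarith [mul_nonneg h2 h1]

lemma norm_V_le_decay {α : ℝ} (h0 : 0 < α) (h2 : α ≤ 1/2) :
    ‖V f N α‖ ≤ K f * (1/α) ^ β f := by
  rw [V_eq, norm_mul, Complex.norm_real, Real.norm_eq_abs, abs_of_nonneg (c₀_pos f).le]
  calc c₀ f * ‖∑ m ∈ Finset.Icc 1 N, (((m : ℝ) ^ (β f - 1) : ℝ) : ℂ) * e (α * m)‖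
      ≤ c₀ f * ((1 / β f + 1) * (1/α) ^ β f) :=
        mul_le_mul_of_nonneg_left (norm_W_decay (β_pos f) (β_le_one f) N h0 h2) (c₀_pos f).le
    _ = K f * (1/α) ^ β f := by rw [K]; ring

lemma V_neg (α : ℝ) : V f N (-α) = (starRingEnd ℂ) (V f N α) := by
  rw [V, V, map_mul, Complex.conj_ofReal, map_sum]
  congr 1
  refine Finset.sum_congr rfl fun m _ => ?_
  rw [map_mul, Complex.conj_ofReal, ← e_neg]
  norm_num

lemma norm_V_neg (α : ℝ) : ‖V f N (-α)‖ = ‖V f N α‖ := by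
  rw [V_neg]
  exact RCLike.norm_conj _

lemma continuous_V : Continuous (V f N) := by
  unfold V
  apply continuous_const.mul
  apply continuous_finset_sum
  intro m _
  apply continuous_const.mul
  unfold e
  exact Complex.continuous_exp.comp (by
    apply continuous_const.mul
    exact Complex.continuous_ofReal.comp (continuous_mul_right _))

end SingularAux


open SingularAux in
/-- For `s > θ_d`, the singular integral `J(N) = ∫_{−1/2}^{1/2} V(α)^s e(−αN) dα`
satisfies `J(N) ≪ P^{s − θ_d}`. -/
theorem singularIntegral_bound (f : PseudoPoly) (s : ℕ) (hs : f.θ f.d < (s : ℝ)) :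
    ∃ C > (0 : ℝ), ∃ N₀ : ℕ, ∀ N : ℕ, N₀ ≤ N → ∀ P : ℝ, f.IsLargestRoot N P →
      ‖∫ α in (-(1 / 2 : ℝ))..(1 / 2 : ℝ), V f N α ^ s * e (-α * N)‖ ≤
        C * P ^ ((s : ℝ) - f.θ f.d) := by
  have hθ1 : 1 ≤ θd f := θd_ge_one f
  have hθ0 : 0 < θd f := θd_pos f
  have hβ0 : 0 < β f := β_pos f
  have hβ1 : β f ≤ 1 := β_le_one f
  have hK : 0 < K f := K_pos f
  have hA : 0 < f.A := f.A_pos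
  have hβs : 1 < β f * s := by
    rw [β, div_mul_eq_mul_div, one_mul, lt_div_iff₀ hθ0]
    have : θd f < (s:ℝ) := hs
    linarith
  set u : ℝ := β f * s - 1 with hu
  have hu0 : 0 < u := by rw [hu]; linarith
  set C₁ : ℝ := K f ^ s * (2 + 2 / u) with hC₁
  have hC₁0 : 0 < C₁ := by rw [hC₁]; positivity
  refine ⟨C₁ * f.A ^ u, by positivity, max 2 (⌈f.A⌉₊ + 1), ?_⟩
  intro N hN P hP
  have hN2 : 2 ≤ N := le_trans (le_max_left _ _) hN
  have hNA : f.A < (N : ℝ) := by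
    have h1 : (⌈f.A⌉₊ + 1 : ℕ) ≤ N := le_trans (le_max_right _ _) hN
    have h2 : f.A ≤ (⌈f.A⌉₊ : ℝ) := Nat.le_ceil _
    have h3 : ((⌈f.A⌉₊ + 1 : ℕ) : ℝ) ≤ (N : ℝ) := by exact_mod_cast h1
    push_cast at h3
    linarith
  obtain ⟨hP1, hPN⟩ := f.root_bound hNA hP
  have hNpos : (0:ℝ) < N := by positivity
  have hNR2 : (2:ℝ) ≤ (N:ℝ) := by exact_mod_cast hN2
  have hNinv2 : 1 / (N:ℝ) ≤ 1/2 := by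
    rw [div_le_div_iff₀ hNpos two_pos]
    linarith
  have hNinv0 : (0:ℝ) < 1 / (N:ℝ) := by positivity
  -- the integrand
  set g : ℝ → ℂ := fun α => V f N α ^ s * e (-α * N) with hg
  have hgc : Continuous g := by
    apply ((continuous_V f N).pow s).mul
    unfold e
    exact Complex.continuous_exp.comp (by
      apply continuous_const.mul
      exact Complex.continuous_ofReal.comp (by continuity))
  have hnormg : ∀ α : ℝ, ‖g α‖ = ‖V f N α‖ ^ s := by
    intro α
    rw [hg]
    simp only [norm_mul, norm_pow, norm_e, mul_one]
  -- split the integral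
  have hi1 : IntervalIntegrable g MeasureTheory.volume (-(1/2 : ℝ)) (-(1/(N:ℝ))) :=
    hgc.intervalIntegrable _ _
  have hi2 : IntervalIntegrable g MeasureTheory.volume (-(1/(N:ℝ))) (1/(N:ℝ)) :=
    hgc.intervalIntegrable _ _
  have hi3 : IntervalIntegrable g MeasureTheory.volume (1/(N:ℝ)) (1/2 : ℝ) :=
    hgc.intervalIntegrable _ _
  have hi23 : IntervalIntegrable g MeasureTheory.volume (-(1/(N:ℝ))) (1/2 : ℝ) :=
    hgc.intervalIntegrable _ _
  have hsplit2 : (∫ α in (-(1/(N:ℝ)))..(1/(N:ℝ)), g α) + (∫ α in (1/(N:ℝ))..(1/2 : ℝ), g α)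
      = ∫ α in (-(1/(N:ℝ)))..(1/2 : ℝ), g α :=
    intervalIntegral.integral_add_adjacent_intervals hi2 hi3
  have hsplit1 : (∫ α in (-(1/2 : ℝ))..(-(1/(N:ℝ))), g α)
      + (∫ α in (-(1/(N:ℝ)))..(1/2 : ℝ), g α) = ∫ α in (-(1/2 : ℝ))..(1/2 : ℝ), g α :=
    intervalIntegral.integral_add_adjacent_intervals hi1 hi23
  -- pointwise decay bound on (1/N, 1/2]
  have hpt : ∀ α : ℝ, 0 < α → α ≤ 1/2 → ‖V f N α‖ ^ s ≤ K f ^ s * α ^ (-(β f * s)) := by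
    intro α hα0 hα2
    have h1 : ‖V f N α‖ ≤ K f * (1/α) ^ β f := norm_V_le_decay f N hα0 hα2
    calc ‖V f N α‖ ^ s ≤ (K f * (1/α) ^ β f) ^ s :=
          pow_le_pow_left₀ (norm_nonneg _) h1 s
      _ = K f ^ s * α ^ (-(β f * s)) := by
          rw [mul_pow]
          congr 1
          rw [← Real.rpow_natCast ((1/α) ^ β f) s, ← Real.rpow_mul (by positivity),
            one_div, Real.inv_rpow hα0.le, ← Real.rpow_neg hα0.le]
  -- the comparison function is integrable on [1/N, 1/2]
  have hhint : IntervalIntegrable (fun α : ℝ => K f ^ s * α ^ (-(β f * s)))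
      MeasureTheory.volume (1/(N:ℝ)) (1/2 : ℝ) := by
    apply ContinuousOn.intervalIntegrable
    apply continuousOn_const.mul
    intro x hx
    rw [Set.uIcc_of_le hNinv2] at hx
    have : x ≠ 0 := by
      have := hx.1
      intro h
      rw [h] at this
      linarith
    exact (Real.continuousAt_rpow_const x _ (Or.inl this)).continuousWithinAt
  -- value of the comparison integral
  have hval : (∫ α in (1/(N:ℝ))..(1/2 : ℝ), K f ^ s * α ^ (-(β f * s)))
      ≤ K f ^ s * ((N:ℝ) ^ u / u) := by
    rw [intervalIntegral.integral_const_mul]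
    have hnotmem : (0:ℝ) ∉ Set.uIcc (1/(N:ℝ)) (1/2 : ℝ) := by
      rw [Set.uIcc_of_le hNinv2]
      intro h
      exact absurd h.1 (by linarith)
    have hne : -(β f * s) ≠ -1 := by
      intro h
      rw [neg_inj] at h
      linarith
    rw [integral_rpow (Or.inr ⟨hne, hnotmem⟩)]
    have he1 : -(β f * s) + 1 = -u := by rw [hu]; ring
    rw [he1]
    have h2 : ((1:ℝ)/2) ^ (-u) ≥ 0 := le_of_lt (Real.rpow_pos_of_pos one_half_pos _)
    have h3 : (1/(N:ℝ)) ^ (-u) = (N:ℝ) ^ u := by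
      rw [one_div, Real.inv_rpow hNpos.le, ← Real.rpow_neg hNpos.le, neg_neg]
    have h4 : (((1:ℝ)/2) ^ (-u) - (1/(N:ℝ)) ^ (-u)) / (-u) ≤ (N:ℝ) ^ u / u := by
      have heq : (((1:ℝ)/2) ^ (-u) - (1/(N:ℝ)) ^ (-u)) / (-u)
          = ((1/(N:ℝ)) ^ (-u) - ((1:ℝ)/2) ^ (-u)) / u := by
        rw [div_neg, ← neg_div, neg_sub]
      rw [heq, h3]
      exact (div_le_div_iff_of_pos_right hu0).mpr (by linarith)
    exact mul_le_mul_of_nonneg_left h4 (by positivity)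
  -- bound on the right integral
  have hI3 : ‖∫ α in (1/(N:ℝ))..(1/2 : ℝ), g α‖ ≤ K f ^ s * ((N:ℝ) ^ u / u) := by
    calc ‖∫ α in (1/(N:ℝ))..(1/2 : ℝ), g α‖
        ≤ ∫ α in (1/(N:ℝ))..(1/2 : ℝ), ‖g α‖ :=
          intervalIntegral.norm_integral_le_integral_norm hNinv2
      _ ≤ ∫ α in (1/(N:ℝ))..(1/2 : ℝ), K f ^ s * α ^ (-(β f * s)) := by
          apply intervalIntegral.integral_mono_on hNinv2
            (hgc.norm.intervalIntegrable _ _) hhint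
          intro x hx
          rw [hnormg]
          exact hpt x (lt_of_lt_of_le hNinv0 hx.1) hx.2
      _ ≤ K f ^ s * ((N:ℝ) ^ u / u) := hval
  -- bound on the left integral
  have hI1 : ‖∫ α in (-(1/2 : ℝ))..(-(1/(N:ℝ))), g α‖ ≤ K f ^ s * ((N:ℝ) ^ u / u) := by
    have hcomp : (∫ x in (1/(N:ℝ))..(1/2 : ℝ), g (-x))
        = ∫ x in (-(1/2 : ℝ))..(-(1/(N:ℝ))), g x := intervalIntegral.integral_comp_neg g
    rw [← hcomp]
    calc ‖∫ α in (1/(N:ℝ))..(1/2 : ℝ), g (-α)‖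
        ≤ ∫ α in (1/(N:ℝ))..(1/2 : ℝ), ‖g (-α)‖ :=
          intervalIntegral.norm_integral_le_integral_norm hNinv2
      _ ≤ ∫ α in (1/(N:ℝ))..(1/2 : ℝ), K f ^ s * α ^ (-(β f * s)) := by
          apply intervalIntegral.integral_mono_on hNinv2
            ((hgc.comp continuous_neg).norm.intervalIntegrable _ _) hhint
          intro x hx
          show ‖g (-x)‖ ≤ _
          rw [hnormg, norm_V_neg]
          exact hpt x (lt_of_lt_of_le hNinv0 hx.1) hx.2
      _ ≤ K f ^ s * ((N:ℝ) ^ u / u) := hval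
  -- bound on the middle integral
  have hI2 : ‖∫ α in (-(1/(N:ℝ)))..(1/(N:ℝ)), g α‖ ≤ K f ^ s * (2 * (N:ℝ) ^ u) := by
    have h1 : ∀ x ∈ Set.uIoc (-(1/(N:ℝ))) (1/(N:ℝ)), ‖g x‖ ≤ (K f * (N:ℝ) ^ β f) ^ s := by
      intro x _
      rw [hnormg]
      exact pow_le_pow_left₀ (norm_nonneg _) (norm_V_le_sup f N x) s
    have h2 := intervalIntegral.norm_integral_le_of_norm_le_const h1
    have h3 : |(1/(N:ℝ)) - (-(1/(N:ℝ)))| = 2 / (N:ℝ) := by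
      rw [sub_neg_eq_add, abs_of_pos (by positivity)]
      ring
    have h4 : (K f * (N:ℝ) ^ β f) ^ s * (2 / (N:ℝ)) = K f ^ s * (2 * (N:ℝ) ^ u) := by
      rw [mul_pow, ← Real.rpow_natCast ((N:ℝ) ^ β f) s, ← Real.rpow_mul hNpos.le, hu,
        Real.rpow_sub_one hNpos.ne']
      ring
    calc ‖∫ α in (-(1/(N:ℝ)))..(1/(N:ℝ)), g α‖
        ≤ (K f * (N:ℝ) ^ β f) ^ s * |(1/(N:ℝ)) - (-(1/(N:ℝ)))| := h2
      _ = K f ^ s * (2 * (N:ℝ) ^ u) := by rw [h3, h4]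
  -- combine
  have hJ : ‖∫ α in (-(1/2 : ℝ))..(1/2 : ℝ), g α‖ ≤ C₁ * (N:ℝ) ^ u := by
    rw [← hsplit1, ← hsplit2]
    calc ‖(∫ α in (-(1/2 : ℝ))..(-(1/(N:ℝ))), g α)
          + ((∫ α in (-(1/(N:ℝ)))..(1/(N:ℝ)), g α) + ∫ α in (1/(N:ℝ))..(1/2 : ℝ), g α)‖
        ≤ ‖∫ α in (-(1/2 : ℝ))..(-(1/(N:ℝ))), g α‖
          + ‖∫ α in (-(1/(N:ℝ)))..(1/(N:ℝ)), g α‖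
          + ‖∫ α in (1/(N:ℝ))..(1/2 : ℝ), g α‖ := (norm_add_le _ _).trans (by
            have := norm_add_le (∫ α in (-(1/(N:ℝ)))..(1/(N:ℝ)), g α)
              (∫ α in (1/(N:ℝ))..(1/2 : ℝ), g α)
            linarith)
      _ ≤ K f ^ s * ((N:ℝ) ^ u / u) + K f ^ s * (2 * (N:ℝ) ^ u)
          + K f ^ s * ((N:ℝ) ^ u / u) := add_le_add (add_le_add hI1 hI2) hI3
      _ = C₁ * (N:ℝ) ^ u := by rw [hC₁]; ring
  -- convert N^u to P
  have hP0 : (0:ℝ) < P := lt_of_lt_of_le one_pos hP1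
  have hPθ : (0:ℝ) ≤ P ^ (θd f) := Real.rpow_nonneg hP0.le _
  have hNu : (N:ℝ) ^ u ≤ f.A ^ u * P ^ ((s:ℝ) - θd f) := by
    have h1 : (N:ℝ) ^ u ≤ (f.A * P ^ (θd f)) ^ u :=
      Real.rpow_le_rpow hNpos.le hPN hu0.le
    have h2 : (f.A * P ^ (θd f)) ^ u = f.A ^ u * (P ^ (θd f)) ^ u :=
      Real.mul_rpow hA.le hPθ
    have h3 : (P ^ (θd f)) ^ u = P ^ (θd f * u) := (Real.rpow_mul hP0.le _ _).symm
    have hθβ : θd f * β f = 1 := by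
      rw [β]
      field_simp
    have h4 : θd f * u = (s:ℝ) - θd f := by
      rw [hu]
      linear_combination (s:ℝ) * hθβ
    rw [h2, h3, h4] at h1
    exact h1
  calc ‖∫ α in (-(1/2 : ℝ))..(1/2 : ℝ), V f N α ^ s * e (-α * N)‖
      = ‖∫ α in (-(1/2 : ℝ))..(1/2 : ℝ), g α‖ := rfl
    _ ≤ C₁ * (N:ℝ) ^ u := hJ
    _ ≤ C₁ * (f.A ^ u * P ^ ((s:ℝ) - θd f)) := mul_le_mul_of_nonneg_left hNu hC₁0.le
    _ = C₁ * f.A ^ u * P ^ ((s:ℝ) - f.θ f.d) := by rw [show θd f = f.θ f.d from rfl]; ring
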